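/- Let q = 2^m with m ≥ 5 odd. Define B^u_{σ_{5,3},q+1} as the set of 5-subsets B of U_{q+1} such that σ_{5,3}(B − a) = 0 for some a ∈ U_{q+1}. Then B^u_{σ_{5,3},q+1} consists of all 5-subsets of U_{q+1}, i.e., it is a complete 4-design with λ = q − 3. -/

import Mathlib

open Finset

attribute [local instance] Classical.propDecidable

/-- The `l`-th elementary symmetric polynomial evaluated on a finite set `B`. -/
noncomputable def esym {F : Type*} [CommRing F] (B : Finset F) (l : ℕ) : F :=
  ∑ s ∈ B.powersetCard l, ∏ x ∈ s, x

/-- The set of `n`-th roots of unity. -/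
def rootsSet (F : Type*) [Monoid F] (n : ℕ) : Set F := {u | u ^ n = 1}

section EsymLemmas

variable {F : Type*} [CommRing F]

lemma esym_zero (B : Finset F) : esym B 0 = 1 := by
  simp [esym]

lemma esym_insert {a : F} {s : Finset F} (h : a ∉ s) (l : ℕ) :
    esym (insert a s) (l + 1) = esym s (l + 1) + a * esym s l := by
  classical
  have hdisj : Disjoint (s.powersetCard (l + 1)) ((s.powersetCard l).image (insert a)) := by
    rw [Finset.disjoint_right]
    rintro r hr hr'
    obtain ⟨t, ht, rfl⟩ := Finset.mem_image.mp hr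
    exact h ((Finset.mem_powersetCard.mp hr').1 (Finset.mem_insert_self a t))
  have hinj : ∀ t ∈ s.powersetCard l, ∀ u ∈ s.powersetCard l, insert a t = insert a u → t = u := by
    intro t ht u hu he
    have hat : a ∉ t := fun hat => h ((Finset.mem_powersetCard.mp ht).1 hat)
    have hau : a ∉ u := fun hau => h ((Finset.mem_powersetCard.mp hu).1 hau)
    rw [← Finset.erase_insert hat, he, Finset.erase_insert hau]
  unfold esym
  rw [Finset.powersetCard_succ_insert h, Finset.sum_union hdisj, Finset.sum_image hinj,
    Finset.mul_sum]
  congr 1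
  refine Finset.sum_congr rfl fun t ht => ?_
  rw [Finset.prod_insert fun hat => h ((Finset.mem_powersetCard.mp ht).1 hat)]

lemma esym_insert1 {a : F} {s : Finset F} (h : a ∉ s) :
    esym (insert a s) 1 = esym s 1 + a := by
  have := esym_insert h 0
  rwa [esym_zero, mul_one] at this

lemma esym_insert2 {a : F} {s : Finset F} (h : a ∉ s) :
    esym (insert a s) 2 = esym s 2 + a * esym s 1 := esym_insert h 1

lemma esym_insert3 {a : F} {s : Finset F} (h : a ∉ s) :
    esym (insert a s) 3 = esym s 3 + a * esym s 2 := esym_insert h 2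

lemma esym_singleton1 (x : F) : esym {x} 1 = x := by
  unfold esym
  rw [Finset.powersetCard_one]
  simp

lemma esym_singleton2 (x : F) : esym {x} 2 = 0 := by
  unfold esym
  rw [Finset.powersetCard_eq_empty.mpr (by simp), Finset.sum_empty]

lemma esym_singleton3 (x : F) : esym {x} 3 = 0 := by
  unfold esym
  rw [Finset.powersetCard_eq_empty.mpr (by simp), Finset.sum_empty]

lemma esym_shift (h2 : (2 : F) = 0) (a b0 b1 b2 b3 b4 : F)
    (h01 : b0 ≠ b1) (h02 : b0 ≠ b2) (h03 : b0 ≠ b3) (h04 : b0 ≠ b4)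
    (h12 : b1 ≠ b2) (h13 : b1 ≠ b3) (h14 : b1 ≠ b4)
    (h23 : b2 ≠ b3) (h24 : b2 ≠ b4) (h34 : b3 ≠ b4) :
    esym (({b0, b1, b2, b3, b4} : Finset F).image (fun b => b - a)) 3
      = esym ({b0, b1, b2, b3, b4} : Finset F) 3
        + a * esym ({b0, b1, b2, b3, b4} : Finset F) 2 := by
  classical
  have s01 : b0 - a ≠ b1 - a := by simpa using h01
  have s02 : b0 - a ≠ b2 - a := by simpa using h02
  have s03 : b0 - a ≠ b3 - a := by simpa using h03
  have s04 : b0 - a ≠ b4 - a := by simpa using h04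
  have s12 : b1 - a ≠ b2 - a := by simpa using h12
  have s13 : b1 - a ≠ b3 - a := by simpa using h13
  have s14 : b1 - a ≠ b4 - a := by simpa using h14
  have s23 : b2 - a ≠ b3 - a := by simpa using h23
  have s24 : b2 - a ≠ b4 - a := by simpa using h24
  have s34 : b3 - a ≠ b4 - a := by simpa using h34
  simp only [Finset.image_insert, Finset.image_singleton]
  have m0 : b0 ∉ ({b1, b2, b3, b4} : Finset F) := by simp [h01, h02, h03, h04]
  have m1 : b1 ∉ ({b2, b3, b4} : Finset F) := by simp [h12, h13, h14]
  have m2 : b2 ∉ ({b3, b4} : Finset F) := by simp [h23, h24]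
  have m3 : b3 ∉ ({b4} : Finset F) := by simp [h34]
  have n0 : b0 - a ∉ ({b1 - a, b2 - a, b3 - a, b4 - a} : Finset F) := by
    simp [h01, h02, h03, h04]
  have n1 : b1 - a ∉ ({b2 - a, b3 - a, b4 - a} : Finset F) := by simp [h12, h13, h14]
  have n2 : b2 - a ∉ ({b3 - a, b4 - a} : Finset F) := by simp [h23, h24]
  have n3 : b3 - a ∉ ({b4 - a} : Finset F) := by simp [h34]
  rw [esym_insert3 n0, esym_insert3 n1, esym_insert3 n2, esym_insert3 n3,
    esym_insert2 n1, esym_insert2 n2, esym_insert2 n3,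
    esym_insert1 n2, esym_insert1 n3,
    esym_singleton1, esym_singleton2, esym_singleton3]
  rw [esym_insert3 m0, esym_insert3 m1, esym_insert3 m2, esym_insert3 m3,
    esym_insert2 m0, esym_insert2 m1, esym_insert2 m2, esym_insert2 m3,
    esym_insert1 m1, esym_insert1 m2, esym_insert1 m3,
    esym_singleton1, esym_singleton2, esym_singleton3]
  linear_combination (-2 * a * (b0*b1 + b0*b2 + b0*b3 + b0*b4 + b1*b2 + b1*b3 + b1*b4 +
    b2*b3 + b2*b4 + b3*b4) + 3 * a ^ 2 * (b0 + b1 + b2 + b3 + b4) - 5 * a ^ 3) * h2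

end EsymLemmas

section CompLemma

variable {F : Type*} [Field F] [CharP F 2]

lemma esym_comp {n : ℕ} {B : Finset F} (hB : ∀ x ∈ B, x ^ (2 ^ n + 1) = 1)
    {l : ℕ} (hl : l ≤ B.card) :
    esym B l ^ 2 ^ n * esym B B.card = esym B (B.card - l) := by
  classical
  unfold esym
  rw [Finset.powersetCard_self, Finset.sum_singleton, sum_pow_char_pow, Finset.sum_mul]
  refine Finset.sum_nbij' (fun s => B \ s) (fun t => B \ t) ?_ ?_ ?_ ?_ ?_
  · intro s hs
    obtain ⟨hsub, hcard⟩ := Finset.mem_powersetCard.mp hs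
    exact Finset.mem_powersetCard.mpr ⟨Finset.sdiff_subset, by rw [Finset.card_sdiff_of_subset hsub, hcard]⟩
  · intro t ht
    obtain ⟨hsub, hcard⟩ := Finset.mem_powersetCard.mp ht
    refine Finset.mem_powersetCard.mpr ⟨Finset.sdiff_subset, ?_⟩
    rw [Finset.card_sdiff_of_subset hsub, hcard]
    omega
  · intro s hs
    exact Finset.sdiff_sdiff_eq_self (Finset.mem_powersetCard.mp hs).1
  · intro t ht
    exact Finset.sdiff_sdiff_eq_self (Finset.mem_powersetCard.mp ht).1
  · intro s hs
    obtain ⟨hsub, hcard⟩ := Finset.mem_powersetCard.mp hs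
    have hone : ∏ x ∈ s, x ^ 2 ^ n * x = 1 := by
      refine Finset.prod_eq_one fun x hx => ?_
      rw [← pow_succ]
      exact hB x (hsub hx)
    calc (∏ x ∈ s, x) ^ 2 ^ n * ∏ x ∈ B, x
        = (∏ x ∈ s, x ^ 2 ^ n) * ((∏ x ∈ B \ s, x) * ∏ x ∈ s, x) := by
          rw [Finset.prod_pow, Finset.prod_sdiff hsub]
      _ = (∏ x ∈ B \ s, x) * ∏ x ∈ s, x ^ 2 ^ n * x := by
          rw [Finset.prod_mul_distrib]; ring
      _ = ∏ x ∈ B \ s, x := by rw [hone, mul_one]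

lemma exists_shift {n : ℕ} (hn : n ≠ 0) (B : Finset F)
    (hB : ↑B ⊆ rootsSet F (2 ^ n + 1)) (hcard : B.card = 5) :
    ∃ a ∈ rootsSet F (2 ^ n + 1), esym (B.image fun b => b - a) 3 = 0 := by
  classical
  have h2 : (2 : F) = 0 := by
    have := CharP.cast_eq_zero F 2
    exact_mod_cast this
  have hBx : ∀ x ∈ B, x ^ (2 ^ n + 1) = 1 := fun x hx => hB hx
  have hshift : ∀ a : F, esym (B.image fun b => b - a) 3 = esym B 3 + a * esym B 2 := by
    intro a
    obtain ⟨b0, t0, d0, rfl, hc0⟩ := Finset.card_eq_succ.mp (show _ = 4 + 1 from hcard)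
    obtain ⟨b1, t1, d1, rfl, hc1⟩ := Finset.card_eq_succ.mp (show _ = 3 + 1 from hc0)
    obtain ⟨b2, t2, d2, rfl, hc2⟩ := Finset.card_eq_succ.mp (show _ = 2 + 1 from hc1)
    obtain ⟨b3, t3, d3, rfl, hc3⟩ := Finset.card_eq_succ.mp (show _ = 1 + 1 from hc2)
    obtain ⟨b4, rfl⟩ := Finset.card_eq_one.mp hc3
    simp only [Finset.mem_insert, Finset.mem_singleton, not_or] at d0 d1 d2
    rw [Finset.mem_singleton] at d3
    exact esym_shift h2 a b0 b1 b2 b3 b4 d0.1 d0.2.1 d0.2.2.1 d0.2.2.2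
      d1.1 d1.2.1 d1.2.2 d2.1 d2.2 d3
  have hA : esym B 2 ^ 2 ^ n * esym B 5 = esym B 3 := by
    have h := esym_comp hBx (l := 2) (by rw [hcard]; norm_num)
    rw [hcard] at h
    exact h
  have hB3 : esym B 3 ^ 2 ^ n * esym B 5 = esym B 2 := by
    have h := esym_comp hBx (l := 3) (by rw [hcard]; norm_num)
    rw [hcard] at h
    exact h
  by_cases hs2 : esym B 2 = 0
  · refine ⟨1, ?_, ?_⟩
    · show (1 : F) ^ (2 ^ n + 1) = 1
      simp
    · have h3 : esym B 3 = 0 := by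
        rw [← hA, hs2, zero_pow (by positivity), zero_mul]
      rw [hshift 1, h3, hs2]
      ring
  · refine ⟨esym B 3 / esym B 2, ?_, ?_⟩
    · show (esym B 3 / esym B 2) ^ (2 ^ n + 1) = 1
      rw [div_pow]
      have key : esym B 3 ^ (2 ^ n + 1) = esym B 2 ^ (2 ^ n + 1) := by
        rw [pow_succ, pow_succ]
        calc esym B 3 ^ 2 ^ n * esym B 3
            = esym B 3 ^ 2 ^ n * (esym B 2 ^ 2 ^ n * esym B 5) := by rw [hA]
          _ = esym B 2 ^ 2 ^ n * (esym B 3 ^ 2 ^ n * esym B 5) := by ring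
          _ = esym B 2 ^ 2 ^ n * esym B 2 := by rw [hB3]
      rw [key, div_self (pow_ne_zero _ hs2)]
    · rw [hshift, div_mul_cancel₀ _ hs2, ← two_mul, h2, zero_mul]

end CompLemma

lemma ncard_rootsSet {F : Type*} [Field F] [Finite F] {k : ℕ} (hk : k ≠ 0)
    (hdvd : k ∣ Nat.card F - 1) : (rootsSet F k).ncard = k := by
  classical
  obtain ⟨g, hg⟩ := IsCyclic.exists_ofOrder_eq_natCard (α := Fˣ)
  have hN : Nat.card Fˣ = Nat.card F - 1 := Nat.card_units F
  have hkN : k ∣ Nat.card Fˣ := hN ▸ hdvd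
  have hN0 : Nat.card Fˣ ≠ 0 := Nat.card_pos.ne'
  have hord : orderOf (g ^ (Nat.card Fˣ / k)) = k := by
    rw [orderOf_pow, hg, Nat.gcd_eq_right (Nat.div_dvd_of_dvd hkN),
      Nat.div_div_self hkN hN0]
  have hprim : IsPrimitiveRoot ((g ^ (Nat.card Fˣ / k) : Fˣ) : F) k := by
    rw [IsPrimitiveRoot.coe_units_iff]
    have h := IsPrimitiveRoot.orderOf (g ^ (Nat.card Fˣ / k))
    rwa [hord] at h
  have hset : rootsSet F k = ↑(Polynomial.nthRootsFinset k (1 : F)) := by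
    ext x
    rw [Finset.mem_coe, Polynomial.mem_nthRootsFinset (Nat.pos_of_ne_zero hk) (1 : F)]
    exact Iff.rfl
  rw [hset, Set.ncard_coe_finset, hprim.card_nthRootsFinset]

theorem stmt14 (m : ℕ) (hm : 5 ≤ m) (hodd : Odd m) :
    ({B : Finset (GaloisField 2 (2 * m)) |
        ↑B ⊆ rootsSet (GaloisField 2 (2 * m)) (2 ^ m + 1) ∧ B.card = 5 ∧
          ∃ a ∈ rootsSet (GaloisField 2 (2 * m)) (2 ^ m + 1),
            esym (B.image (fun b => b - a)) 3 = 0} =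
      {B : Finset (GaloisField 2 (2 * m)) |
        ↑B ⊆ rootsSet (GaloisField 2 (2 * m)) (2 ^ m + 1) ∧ B.card = 5}) ∧
    ∀ E : Finset (GaloisField 2 (2 * m)),
      ↑E ⊆ rootsSet (GaloisField 2 (2 * m)) (2 ^ m + 1) → E.card = 4 →
        {B : Finset (GaloisField 2 (2 * m)) |
          ↑B ⊆ rootsSet (GaloisField 2 (2 * m)) (2 ^ m + 1) ∧ B.card = 5 ∧
            (∃ a ∈ rootsSet (GaloisField 2 (2 * m)) (2 ^ m + 1),
              esym (B.image (fun b => b - a)) 3 = 0) ∧ E ⊆ B}.ncard =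
          2 ^ m - 3 := by
  classical
  set F := GaloisField 2 (2 * m) with hF
  have hm0 : m ≠ 0 := by omega
  have h2m0 : 2 * m ≠ 0 := by omega
  have hkey : ∀ B : Finset F, ↑B ⊆ rootsSet F (2 ^ m + 1) → B.card = 5 →
      ∃ a ∈ rootsSet F (2 ^ m + 1), esym (B.image fun b => b - a) 3 = 0 :=
    fun B h1 h5 => exists_shift hm0 B h1 h5
  constructor
  · ext B
    simp only [Set.mem_setOf_eq]
    constructor
    · rintro ⟨h1, h5, -⟩
      exact ⟨h1, h5⟩
    · rintro ⟨h1, h5⟩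
      exact ⟨h1, h5, hkey B h1 h5⟩
  · intro E hE hE4
    have him : {B : Finset F |
        ↑B ⊆ rootsSet F (2 ^ m + 1) ∧ B.card = 5 ∧
          (∃ a ∈ rootsSet F (2 ^ m + 1), esym (B.image fun b => b - a) 3 = 0) ∧ E ⊆ B}
        = (fun u => insert u E) '' (rootsSet F (2 ^ m + 1) \ ↑E) := by
      ext B
      simp only [Set.mem_setOf_eq, Set.mem_image, Set.mem_diff]
      constructor
      · rintro ⟨hBU, hB5, -, hEB⟩
        have hcard : (B \ E).card = 1 := by rw [Finset.card_sdiff_of_subset hEB, hB5, hE4]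
        obtain ⟨u, hu⟩ := Finset.card_eq_one.mp hcard
        have huBE : u ∈ B \ E := hu ▸ Finset.mem_singleton_self u
        have huB : u ∈ B := (Finset.mem_sdiff.mp huBE).1
        have huE : u ∉ E := (Finset.mem_sdiff.mp huBE).2
        refine ⟨u, ⟨hBU huB, huE⟩, ?_⟩
        refine Finset.eq_of_subset_of_card_le (Finset.insert_subset huB hEB) ?_
        rw [Finset.card_insert_of_notMem huE, hE4, hB5]
      · rintro ⟨u, ⟨huU, huE⟩, rfl⟩
        have huE' : u ∉ E := fun h => huE h
        have hsub : ↑(insert u E) ⊆ rootsSet F (2 ^ m + 1) := by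
          rw [Finset.coe_insert]
          exact Set.insert_subset huU hE
        have hc : (insert u E).card = 5 := by
          rw [Finset.card_insert_of_notMem huE', hE4]
        exact ⟨hsub, hc, hkey _ hsub hc, Finset.subset_insert u E⟩
    have hinj : Set.InjOn (fun u => insert u E) (rootsSet F (2 ^ m + 1) \ ↑E) := by
      intro u hu v hv h
      have h' : insert u E = insert v E := h
      have : u ∈ insert v E := h' ▸ Finset.mem_insert_self u E
      rcases Finset.mem_insert.mp this with h' | h'
      · exact h'
      · exact absurd h' fun hc => hu.2 h'
    have hq : 32 ≤ 2 ^ m := by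
      calc (32 : ℕ) = 2 ^ 5 := by norm_num
        _ ≤ 2 ^ m := Nat.pow_le_pow_right (by norm_num) hm
    have hdvd : (2 ^ m + 1) ∣ Nat.card F - 1 := by
      rw [hF, GaloisField.card 2 (2 * m) h2m0]
      refine ⟨2 ^ m - 1, ?_⟩
      have hsq : (2 : ℕ) ^ (2 * m) = 2 ^ m * 2 ^ m := by rw [two_mul, pow_add]
      rw [hsq]
      obtain ⟨j, hj⟩ : ∃ j, 2 ^ m = j + 1 := ⟨2 ^ m - 1, by omega⟩
      rw [hj]
      have h1 : (j + 1) + 1 - 1 = j + 1 := by omega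
      have h2 : (j + 1) - 1 = j := by omega
      rw [h2]
      exact Nat.sub_eq_of_eq_add (by ring)
    rw [him, Set.ncard_image_of_injOn hinj, Set.ncard_diff hE, Set.ncard_coe_finset, hE4,
      ncard_rootsSet (by positivity) hdvd]
    omega
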